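/- Let N > 2 be an integer, p > 1, and k < 0 with k²·(1-p) + k·(p-N) < 0 (so that H'(0) < 0). Let 0 < b ≤ π and suppose H : [0, b) → ℝ is differentiable on [0, b) with continuous derivative, H(0) = 0, H'(0) < 0, and H satisfies the H-equation on (0, b). Then H(x) < 0 and H'(x) < 0 for all x ∈ (0, b). -/

import Mathlib

noncomputable section
open Real Set Filter Topology

/-- `H` satisfies the first-order H-equation (for parameters `p`, `N`, `k`) on the set `I`:
`((p-1)H² + k²)H' = (1-p)(H² + k²)² + (H² + k²)(k(p-N) + (2-N)·H·cot x)`. -/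
def HEqOn (p : ℝ) (N : ℕ) (k : ℝ) (H : ℝ → ℝ) (I : Set ℝ) : Prop :=
  ∀ x ∈ I,
    ((p - 1) * (H x) ^ 2 + k ^ 2) * deriv H x =
      (1 - p) * ((H x) ^ 2 + k ^ 2) ^ 2
        + ((H x) ^ 2 + k ^ 2) * (k * (p - (N : ℝ)) + (2 - (N : ℝ)) * H x * Real.cot x)


/-- If `F c = 0`, `F` has negative derivative at `c > 0`, and `F < 0` on `(0,c)`, contradiction. -/
lemma no_crossing {F : ℝ → ℝ} {c d : ℝ} (hder : HasDerivAt F d c) (hd : d < 0)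
    (hFc : F c = 0) (hc : 0 < c) (hneg : ∀ x ∈ Ioo 0 c, F x < 0) : False := by
  have hs := hasDerivAt_iff_tendsto_slope.1 hder
  have h1 : ∀ᶠ x in 𝓝[≠] c, slope F c x < 0 :=
    hs (Iio_mem_nhds hd)
  have h2 : Ioo (0:ℝ) c ∈ 𝓝[<] c := Ioo_mem_nhdsLT_of_mem ⟨hc, le_refl c⟩
  have hle : 𝓝[<] c ≤ 𝓝[≠] c := nhdsWithin_mono c fun x hx => ne_of_lt hx
  have h3 : ∀ᶠ x in 𝓝[<] c, slope F c x < 0 := hle h1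
  have h4 : ∀ᶠ x in 𝓝[<] c, x ∈ Ioo (0:ℝ) c := h2
  rcases (h3.and h4).exists with ⟨x, hx1, hx2⟩
  have hFx := hneg x hx2
  have hxc : x - c < 0 := by linarith [hx2.2]
  have : slope F c x = (F x - F c) / (x - c) := by
    rw [slope_def_field]
  rw [this, hFc, sub_zero] at hx1
  have : 0 < F x / (x - c) := div_pos_of_neg_of_neg hFx hxc
  linarith

/-- First zero of a continuous function that starts negative. -/
lemma first_zero {F : ℝ → ℝ} {b δ x0 : ℝ} (hδ : 0 < δ) (hδb : δ < b)
    (hcont : ContinuousOn F (Ioo 0 b)) (hneg : ∀ x ∈ Ioo 0 δ, F x < 0)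
    (hx0 : x0 ∈ Ioo 0 b) (hF0 : 0 ≤ F x0) :
    ∃ c ∈ Ioo 0 b, F c = 0 ∧ ∀ x ∈ Ioo 0 c, F x < 0 := by
  set a := min (δ/2) (x0/2) with ha
  have hapos : 0 < a := lt_min (by linarith) (by linarith [hx0.1])
  have haδ : a < δ := lt_of_le_of_lt (min_le_left _ _) (by linarith)
  have hax0 : a < x0 := lt_of_le_of_lt (min_le_right _ _) (by linarith [hx0.1])
  have hsub : Icc a x0 ⊆ Ioo 0 b := fun y hy => ⟨lt_of_lt_of_le hapos hy.1, lt_of_le_of_lt hy.2 hx0.2⟩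
  have hFa : F a < 0 := hneg a ⟨hapos, haδ⟩
  have hcont' : ContinuousOn F (Icc a x0) := hcont.mono hsub
  set S := {x ∈ Icc a x0 | F x = 0} with hS
  have hSne : S.Nonempty := by
    have := intermediate_value_Icc (le_of_lt hax0) hcont'
    rcases this ⟨le_of_lt hFa, hF0⟩ with ⟨y, hy, hFy⟩
    exact ⟨y, hy, hFy⟩
  have hSclosed : IsClosed S := by
    have : S = Icc a x0 ∩ F ⁻¹' {0} := by
      ext y; simp [hS, mem_inter_iff, and_comm]
    rw [this]
    exact hcont'.preimage_isClosed_of_isClosed isClosed_Icc isClosed_singleton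
  have hSbdd : BddBelow S := ⟨a, fun y hy => hy.1.1⟩
  set c := sInf S with hc
  have hcS : c ∈ S := hSclosed.csInf_mem hSne hSbdd
  have hcmem : c ∈ Icc a x0 := hcS.1
  have hcIb : c ∈ Ioo 0 b := hsub hcmem
  refine ⟨c, hcIb, hcS.2, ?_⟩
  intro x hx
  by_cases hxa : x < a
  · exact hneg x ⟨hx.1, lt_trans hxa haδ⟩
  · push_neg at hxa
    by_contra hFx
    push_neg at hFx
    have hxx0 : x ≤ x0 := le_trans (le_of_lt hx.2) hcmem.2
    rcases eq_or_lt_of_le hFx with heq0 | hpos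
    · have : x ∈ S := ⟨⟨hxa, hxx0⟩, heq0.symm⟩
      exact absurd (csInf_le hSbdd this) (not_le.2 hx.2)
    · have := intermediate_value_Icc hxa (hcont'.mono (Icc_subset_Icc le_rfl hxx0))
      rcases this ⟨le_of_lt hFa, le_of_lt hpos⟩ with ⟨y, hy, hFy⟩
      have : y ∈ S := ⟨⟨hy.1, le_trans hy.2 hxx0⟩, hFy⟩
      have := csInf_le hSbdd this
      linarith [hy.2, hx.2]
/-- If `H` solves the H-equation on `(0,b)` with `H(0) = 0` and negative initial slope,
then `H < 0` and `H' < 0` on `(0,b)`. -/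
theorem H_decreasing (N : ℕ) (hN : 2 < N) (p : ℝ) (hp : 1 < p) (k : ℝ) (hk : k < 0)
    (hslope : k ^ 2 * (1 - p) + k * (p - (N : ℝ)) < 0)
    (b : ℝ) (hb0 : 0 < b) (hb : b ≤ π)
    (H : ℝ → ℝ)
    (hd : ∀ x ∈ Ico (0 : ℝ) b, DifferentiableWithinAt ℝ H (Ici 0) x)
    (hdc : ContinuousOn (derivWithin H (Ici 0)) (Ico 0 b))
    (hH0 : H 0 = 0)
    (hH'0 : derivWithin H (Ici 0) 0 < 0)
    (heq : HEqOn p N k H (Ioo 0 b)) :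
    ∀ x ∈ Ioo (0 : ℝ) b, H x < 0 ∧ deriv H x < 0 := by
  have hk2 : (0:ℝ) < k ^ 2 := by nlinarith
  have hDpos : ∀ x : ℝ, 0 < (p - 1) * (H x) ^ 2 + k ^ 2 := fun x => by nlinarith [sq_nonneg (H x)]
  have hmem : ∀ x ∈ Ioo (0:ℝ) b, Ici (0:ℝ) ∈ 𝓝 x := fun x hx => Ici_mem_nhds hx.1
  have hIcoIoo : Ioo (0:ℝ) b ⊆ Ico 0 b := Ioo_subset_Ico_self
  have hdiff : ∀ x ∈ Ioo (0:ℝ) b, DifferentiableAt ℝ H x := fun x hx =>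
    (hd x (hIcoIoo hx)).differentiableAt (hmem x hx)
  have hderiv_eq : ∀ x ∈ Ioo (0:ℝ) b, derivWithin H (Ici 0) x = deriv H x := fun x hx =>
    derivWithin_of_mem_nhds (hmem x hx)
  have hGcont : ContinuousOn (deriv H) (Ioo 0 b) :=
    (hdc.mono hIcoIoo).congr fun x hx => (hderiv_eq x hx).symm
  have hHcont : ContinuousOn H (Ico 0 b) := fun x hx =>
    ((hd x hx).continuousWithinAt).mono (fun y hy => hy.1)
  -- find δ with deriv H < 0 on (0, δ)
  obtain ⟨ε, hεpos, hεsub⟩ : ∃ ε > 0, Metric.ball (0:ℝ) ε ∩ Ico 0 b ⊆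
      {x | derivWithin H (Ici 0) x < 0} := by
    have h0 : (0:ℝ) ∈ Ico (0:ℝ) b := ⟨le_refl _, hb0⟩
    have := (hdc 0 h0) (Iio_mem_nhds hH'0)
    rw [Filter.mem_map, mem_nhdsWithin] at this
    rcases this with ⟨U, hUopen, hU0, hUsub⟩
    rcases Metric.isOpen_iff.1 hUopen 0 hU0 with ⟨ε, hε, hball⟩
    exact ⟨ε, hε, fun y hy => hUsub ⟨hball hy.1, hy.2⟩⟩
  set δ := min (ε/2) (b/2) with hδdef
  have hδpos : 0 < δ := lt_min (by linarith) (by linarith)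
  have hδb : δ < b := lt_of_le_of_lt (min_le_right _ _) (by linarith)
  have hGnegδ : ∀ x ∈ Ioo (0:ℝ) δ, deriv H x < 0 := by
    intro x hx
    have hxb : x ∈ Ioo (0:ℝ) b := ⟨hx.1, lt_trans hx.2 hδb⟩
    have h1 : x ∈ Metric.ball (0:ℝ) ε := by
      rw [Metric.mem_ball, Real.dist_eq, sub_zero, abs_of_pos hx.1]
      exact lt_of_lt_of_le hx.2 (le_trans (min_le_left _ _) (by linarith))
    have := hεsub ⟨h1, hIcoIoo hxb⟩
    rwa [mem_setOf_eq, hderiv_eq x hxb] at this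
  -- H < 0 on (0, δ)
  have hHnegδ : ∀ x ∈ Ioo (0:ℝ) δ, H x < 0 := by
    intro x hx
    have hIccsub : Icc (0:ℝ) δ ⊆ Ico 0 b := fun y hy => ⟨hy.1, lt_of_le_of_lt hy.2 hδb⟩
    have hsa : StrictAntiOn H (Icc 0 δ) := by
      apply strictAntiOn_of_deriv_neg (convex_Icc 0 δ) (hHcont.mono hIccsub)
      intro y hy
      rw [interior_Icc] at hy
      exact hGnegδ y hy
    have := hsa ⟨le_refl _, le_of_lt hδpos⟩ ⟨le_of_lt hx.1, le_of_lt hx.2⟩ hx.1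
    rwa [hH0] at this
  -- H < 0 on (0, b)
  have hHneg : ∀ x ∈ Ioo (0:ℝ) b, H x < 0 := by
    by_contra hcon
    push_neg at hcon
    rcases hcon with ⟨x0, hx0, hHx0⟩
    obtain ⟨c, hcIb, hc0, hcneg⟩ := first_zero hδpos hδb (hHcont.mono hIcoIoo) hHnegδ hx0 hHx0
    have hkey := heq c hcIb
    rw [hc0] at hkey
    have hdc : deriv H c < 0 := by
      by_contra hge
      push_neg at hge
      nlinarith [mul_nonneg (le_of_lt hk2) hge]
    exact no_crossing ((hdiff c hcIb).hasDerivAt) hdc hc0 hcIb.1 hcneg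
  intro x hx
  refine ⟨hHneg x hx, ?_⟩
  by_contra hGx
  push_neg at hGx
  obtain ⟨c, hcIb, hGc0, hGneg⟩ := first_zero hδpos hδb hGcont hGnegδ hx hGx
  -- contradiction at c
  have hHc : H c < 0 := hHneg c hcIb
  have hsinpos : 0 < Real.sin c := Real.sin_pos_of_pos_of_lt_pi hcIb.1 (lt_of_lt_of_le hcIb.2 hb)
  have hsinne : Real.sin c ≠ 0 := ne_of_gt hsinpos
  have hH'c : HasDerivAt H 0 c := by
    have := (hdiff c hcIb).hasDerivAt
    rwa [hGc0] at this
  have hcot : HasDerivAt Real.cot (-(1 / Real.sin c ^ 2)) c := by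
    have h2 := (Real.hasDerivAt_cos c).fun_div (Real.hasDerivAt_sin c) hsinne
    have hfun : Real.cot = fun x => Real.cos x / Real.sin x := by
      funext x; exact Real.cot_eq_cos_div_sin x
    rw [hfun]
    refine h2.congr_deriv ?_
    have h3 := Real.sin_sq_add_cos_sq c
    field_simp
    nlinarith
  have hsqH : HasDerivAt (fun x => (H x) ^ 2) 0 c := by
    simpa using hH'c.fun_pow 2
  have hA : HasDerivAt (fun x => (H x) ^ 2 + k ^ 2) 0 c := by
    simpa using hsqH.add_const (k ^ 2)
  have hterm1 : HasDerivAt (fun x => (1 - p) * ((H x) ^ 2 + k ^ 2) ^ 2) 0 c := by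
    simpa using (hA.pow 2).const_mul (1 - p)
  have hinner : HasDerivAt (fun x => k * (p - (N:ℝ)) + (2 - (N:ℝ)) * H x * Real.cot x)
      ((2 - (N:ℝ)) * (H c * (-(1 / Real.sin c ^ 2)))) c := by
    have h1 := hH'c.fun_mul hcot
    have h2 := h1.const_mul ((2:ℝ) - N)
    have h3 := h2.const_add (k * (p - (N:ℝ)))
    have h4 : (fun x => k * (p - (N:ℝ)) + (2 - (N:ℝ)) * H x * Real.cot x)
        = (fun x => k * (p - (N:ℝ)) + (2 - (N:ℝ)) * (H x * Real.cot x)) := by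
      funext y; ring
    rw [h4]
    refine h3.congr_deriv ?_
    ring
  have hnum : HasDerivAt (fun x => (1 - p) * ((H x) ^ 2 + k ^ 2) ^ 2
      + ((H x) ^ 2 + k ^ 2) * (k * (p - (N:ℝ)) + (2 - (N:ℝ)) * H x * Real.cot x))
      (((H c) ^ 2 + k ^ 2) * ((2 - (N:ℝ)) * (H c * (-(1 / Real.sin c ^ 2))))) c := by
    have := hterm1.add (hA.fun_mul hinner)
    refine this.congr_deriv ?_
    ring
  have hden : HasDerivAt (fun x => (p - 1) * (H x) ^ 2 + k ^ 2) 0 c := by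
    simpa using (hsqH.const_mul (p - 1)).add_const (k ^ 2)
  set dval : ℝ := (((H c) ^ 2 + k ^ 2) * ((2 - (N:ℝ)) * (H c * (-(1 / Real.sin c ^ 2)))))
      / ((p - 1) * (H c) ^ 2 + k ^ 2) with hdval
  have hφ : HasDerivAt (fun x => ((1 - p) * ((H x) ^ 2 + k ^ 2) ^ 2
      + ((H x) ^ 2 + k ^ 2) * (k * (p - (N:ℝ)) + (2 - (N:ℝ)) * H x * Real.cot x))
      / ((p - 1) * (H x) ^ 2 + k ^ 2)) dval c := by
    have := hnum.fun_div hden (ne_of_gt (hDpos c))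
    refine this.congr_deriv ?_
    have hDne : ((p - 1) * (H c) ^ 2 + k ^ 2) ≠ 0 := ne_of_gt (hDpos c)
    have hs2 : Real.sin c ^ 2 ≠ 0 := pow_ne_zero 2 hsinne
    rw [hdval]
    rw [div_eq_div_iff (pow_ne_zero 2 hDne) hDne]
    ring
  have heqn : (deriv H) =ᶠ[𝓝 c] (fun x => ((1 - p) * ((H x) ^ 2 + k ^ 2) ^ 2
      + ((H x) ^ 2 + k ^ 2) * (k * (p - (N:ℝ)) + (2 - (N:ℝ)) * H x * Real.cot x))
      / ((p - 1) * (H x) ^ 2 + k ^ 2)) := by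
    filter_upwards [isOpen_Ioo.mem_nhds hcIb] with y hy
    rw [eq_div_iff (ne_of_gt (hDpos y))]
    linarith [heq y hy]
  have hGd : HasDerivAt (deriv H) dval c := hφ.congr_of_eventuallyEq heqn
  have hdvalneg : dval < 0 := by
    rw [hdval]
    apply div_neg_of_neg_of_pos _ (hDpos c)
    have h1 : (0:ℝ) < (H c) ^ 2 + k ^ 2 := by nlinarith [sq_nonneg (H c)]
    have h2 : (2 - (N:ℝ)) < 0 := by
      have : (2:ℝ) < N := by exact_mod_cast hN
      linarith
    have h3 : 0 < 1 / Real.sin c ^ 2 := by positivity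
    have h4 : 0 < H c * (-(1 / Real.sin c ^ 2)) := by
      apply mul_pos_of_neg_of_neg hHc; linarith
    exact mul_neg_of_pos_of_neg h1 (mul_neg_of_neg_of_pos h2 h4)
  exact no_crossing hGd hdvalneg hGc0 hcIb.1 hGneg
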